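/- Let Z/2 act on the Milnor ring of D_{n+1}, M = k[x,y]/(x^{n-1}+y^2, xy), by (x,y) ↦ (x,−y). The invariant subring is spanned by {1, x, x^2, ..., x^{n-1}} and is isomorphic as a k-algebra to k[x]/(x^n). -/

import Mathlib

open MvPolynomial

set_option synthInstance.maxHeartbeats 1000000
set_option maxHeartbeats 1000000

/-- Let `Z/2` act on the Milnor ring `M = k[x,y]/(x^(n-1)+y^2, xy)` of `D_{n+1}` by
`(x,y) ↦ (x,−y)`.  The invariant subring is spanned by `{1, x, ..., x^(n-1)}` and is
isomorphic as a `k`-algebra to `k[x]/(x^n)` (folding of `D_{n+1}` to `B_n`). -/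
theorem stmt_14 (k : Type*) [Field k] [CharZero k] (n : ℕ) (hn : 3 ≤ n)
    (I : Ideal (MvPolynomial (Fin 2) k))
    (hI : I = Ideal.span {X 0 ^ (n - 1) + X 1 ^ 2, X 0 * X 1})
    (σ : (MvPolynomial (Fin 2) k ⧸ I) →ₐ[k] (MvPolynomial (Fin 2) k ⧸ I))
    (hσx : σ (Ideal.Quotient.mk I (X 0)) = Ideal.Quotient.mk I (X 0))
    (hσy : σ (Ideal.Quotient.mk I (X 1)) = - Ideal.Quotient.mk I (X 1)) :
    Subalgebra.toSubmodule (AlgHom.equalizer σ (AlgHom.id k _)) =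
      Submodule.span k (Set.range fun i : Fin n =>
        Ideal.Quotient.mk I (X 0) ^ (i : ℕ)) ∧
    ∃ e : AdjoinRoot ((Polynomial.X : Polynomial k) ^ n) ≃ₐ[k]
        AlgHom.equalizer σ (AlgHom.id k _),
      ((e (AdjoinRoot.root ((Polynomial.X : Polynomial k) ^ n)) :
          AlgHom.equalizer σ (AlgHom.id k _)) : MvPolynomial (Fin 2) k ⧸ I)
        = Ideal.Quotient.mk I (X 0) := by
  set x := Ideal.Quotient.mk I (X 0 : MvPolynomial (Fin 2) k) with hxdef
  set y := Ideal.Quotient.mk I (X 1 : MvPolynomial (Fin 2) k) with hydef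
  have hx1 : x ^ (n-1) + y ^ 2 = 0 := by
    rw [hxdef, hydef, ← map_pow, ← map_pow, ← map_add,
      Ideal.Quotient.eq_zero_iff_mem, hI]
    exact Ideal.subset_span (by simp)
  have hxy : x * y = 0 := by
    rw [hxdef, hydef, ← map_mul, Ideal.Quotient.eq_zero_iff_mem, hI]
    exact Ideal.subset_span (by simp)
  have hpow : x ^ (n-1) = - y ^ 2 := by linear_combination hx1
  have hxn : x ^ n = 0 := by
    have h1 : n - 1 + 1 = n := by omega
    calc x ^ n = x ^ (n-1) * x := by rw [← pow_succ, h1]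
    _ = (- y^2) * x := by rw [hpow]
    _ = -(y * (x*y)) := by ring
    _ = 0 := by rw [hxy]; ring
  set S : Set (MvPolynomial (Fin 2) k ⧸ I) :=
    Set.range (fun i : Fin n => x ^ (i:ℕ)) with hS
  have hxiS : ∀ i : ℕ, x ^ i ∈ Submodule.span k S := by
    intro i
    by_cases h : i < n
    · exact Submodule.subset_span ⟨⟨i, h⟩, rfl⟩
    · have hz : x ^ i = 0 := by
        have : x ^ i = x ^ n * x ^ (i - n) := by rw [← pow_add]; congr 1; omega
        rw [this, hxn, zero_mul]
      rw [hz]; exact Submodule.zero_mem _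
  set W := Submodule.span k (insert y S) with hW
  have hSW : Submodule.span k S ≤ W := Submodule.span_mono (Set.subset_insert _ _)
  have hyW : y ∈ W := Submodule.subset_span (Set.mem_insert _ _)
  have hmulx : ∀ q ∈ W, q * x ∈ W := by
    intro q hq
    induction hq using Submodule.span_induction with
    | mem a ha =>
      rcases Set.mem_insert_iff.1 ha with rfl | ⟨i, rfl⟩
      · have h0 : y * x = 0 := by rw [mul_comm]; exact hxy
        rw [h0]; exact Submodule.zero_mem _
      · show x ^ (i:ℕ) * x ∈ W
        rw [← pow_succ]; exact hSW (hxiS _)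
    | zero => rw [zero_mul]; exact Submodule.zero_mem _
    | add a b _ _ ha hb => rw [add_mul]; exact Submodule.add_mem _ ha hb
    | smul c a _ ha => rw [smul_mul_assoc]; exact Submodule.smul_mem _ _ ha
  have hmuly : ∀ q ∈ W, q * y ∈ W := by
    intro q hq
    induction hq using Submodule.span_induction with
    | mem a ha =>
      rcases Set.mem_insert_iff.1 ha with rfl | ⟨i, rfl⟩
      · have h0 : y * y = - x ^ (n-1) := by rw [hpow]; ring
        rw [h0]; exact Submodule.neg_mem _ (hSW (hxiS _))
      · show x ^ (i:ℕ) * y ∈ W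
        rcases Nat.eq_zero_or_pos (i : ℕ) with h0 | h0
        · rw [h0, pow_zero, one_mul]; exact hyW
        · have h1 : x ^ (i:ℕ) * y = x ^ ((i:ℕ)-1) * (x * y) := by
            rw [← mul_assoc, ← pow_succ]; congr 2; omega
          rw [h1, hxy, mul_zero]; exact Submodule.zero_mem _
    | zero => rw [zero_mul]; exact Submodule.zero_mem _
    | add a b _ _ ha hb => rw [add_mul]; exact Submodule.add_mem _ ha hb
    | smul c a _ ha => rw [smul_mul_assoc]; exact Submodule.smul_mem _ _ ha
  have hQW : ∀ q : MvPolynomial (Fin 2) k ⧸ I, q ∈ W := by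
    intro q
    obtain ⟨P, rfl⟩ := Ideal.Quotient.mk_surjective q
    induction P using MvPolynomial.induction_on with
    | C a =>
      have h1 : Ideal.Quotient.mk I (C a) = a • (1 : MvPolynomial (Fin 2) k ⧸ I) := by
        rw [show (Ideal.Quotient.mk I) (C a) = algebraMap k _ a by
            rw [← MvPolynomial.algebraMap_eq,
              IsScalarTower.algebraMap_apply k (MvPolynomial (Fin 2) k)
                (MvPolynomial (Fin 2) k ⧸ I) a, Ideal.Quotient.algebraMap_eq],
          Algebra.algebraMap_eq_smul_one]
      rw [h1]
      exact Submodule.smul_mem _ _ (hSW (by simpa using hxiS 0))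
    | add p q hp hq => rw [map_add]; exact Submodule.add_mem _ hp hq
    | mul_X p i hp =>
      rw [map_mul]
      fin_cases i
      · exact hmulx _ hp
      · exact hmuly _ hp
  have hfix : ∀ z ∈ Submodule.span k S, σ z = z := by
    intro z hz
    induction hz using Submodule.span_induction with
    | mem a ha =>
      obtain ⟨i, rfl⟩ := ha
      show σ (x ^ (i:ℕ)) = x ^ (i:ℕ)
      rw [map_pow, hσx]
    | zero => exact map_zero σ
    | add a b _ _ ha hb => rw [map_add, ha, hb]
    | smul c a _ ha => rw [map_smul, ha]
  have hEq : Subalgebra.toSubmodule (AlgHom.equalizer σ (AlgHom.id k _)) =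
      Submodule.span k S := by
    apply le_antisymm
    · intro q hq
      have hqe : σ q = q := hq
      obtain ⟨a, z, hz, rfl⟩ := Submodule.mem_span_insert.1 (hQW q)
      have h2 : a • y + z = a • (-y) + z := by
        conv_lhs => rw [← hqe]
        rw [map_add, map_smul, hσy, hfix z hz]
      have h3 : (2 : k) • (a • y) = 0 := by
        rw [smul_neg] at h2
        rw [two_smul]
        linear_combination h2
      have h4 : a • y = 0 := by
        rcases smul_eq_zero.1 h3 with h5 | h5
        · exact absurd h5 two_ne_zero
        · exact h5
      rw [h4, zero_add]
      exact hz
    · rw [Submodule.span_le]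
      rintro _ ⟨i, rfl⟩
      show σ _ = _
      rw [map_pow, hσx]
      rfl
  refine ⟨hEq, ?_⟩
  -- Part 2: the algebra isomorphism
  have haev : Polynomial.aeval x ((Polynomial.X : Polynomial k) ^ n) = 0 := by
    rw [map_pow, Polynomial.aeval_X, hxn]
  set ψ : AdjoinRoot ((Polynomial.X : Polynomial k) ^ n) →ₐ[k]
      (MvPolynomial (Fin 2) k ⧸ I) := AdjoinRoot.liftAlgHom _ (Algebra.ofId k _) x haev with hψ
  have hψroot : ψ (AdjoinRoot.root _) = x := by
    rw [hψ]; exact AdjoinRoot.liftAlgHom_root _ (Algebra.ofId k _) x haev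
  set E1 : MvPolynomial (Fin 2) k →ₐ[k] Polynomial k :=
    MvPolynomial.aeval (fun i : Fin 2 => if i = 0 then (Polynomial.X : Polynomial k) else 0)
    with hE1
  set E0 : MvPolynomial (Fin 2) k →ₐ[k] Polynomial k :=
    MvPolynomial.aeval (fun i : Fin 2 => if i = 0 then 0 else (Polynomial.X : Polynomial k))
    with hE0
  have hinj : Function.Injective ψ := by
    rw [injective_iff_map_eq_zero]
    intro z hz
    obtain ⟨p, rfl⟩ := AdjoinRoot.mk_surjective z
    rw [AdjoinRoot.mk_eq_zero]
    have hz' : ψ (AdjoinRoot.mk _ p) = Polynomial.aeval x p := by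
      rw [hψ]; exact AdjoinRoot.liftAlgHom_mk _ (Algebra.ofId k _) x haev p
    have key : (Polynomial.aeval (X 0 : MvPolynomial (Fin 2) k) p) ∈ I := by
      rw [← Ideal.Quotient.eq_zero_iff_mem]
      have h1 := Polynomial.aeval_algHom_apply (Ideal.Quotient.mkₐ k I)
        (X 0 : MvPolynomial (Fin 2) k) p
      rw [Ideal.Quotient.mkₐ_eq_mk] at h1
      rw [← h1, ← hz']
      exact hz
    rw [hI, Ideal.mem_span_pair] at key
    obtain ⟨f, g, hfg⟩ := key
    have hE1A : E1 (Polynomial.aeval (X 0 : MvPolynomial (Fin 2) k) p) = p := by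
      rw [← Polynomial.aeval_algHom_apply E1 (X 0 : MvPolynomial (Fin 2) k) p]
      have hX : E1 (X 0) = Polynomial.X := by simp [hE1]
      rw [hX]
      exact Polynomial.aeval_X_left_apply p
    have hE0A : E0 (Polynomial.aeval (X 0 : MvPolynomial (Fin 2) k) p) =
        Polynomial.C (p.coeff 0) := by
      rw [← Polynomial.aeval_algHom_apply E0 (X 0 : MvPolynomial (Fin 2) k) p]
      have hX : E0 (X 0) = 0 := by simp [hE0]
      rw [hX, Polynomial.aeval_def, Polynomial.eval₂_at_zero, Polynomial.algebraMap_eq]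
    have h3 : E1 f * Polynomial.X ^ (n-1) = p := by
      have h := congrArg E1 hfg
      rw [hE1A] at h
      simpa [hE1] using h
    have h4 : E0 f * Polynomial.X ^ 2 = Polynomial.C (p.coeff 0) := by
      have h := congrArg E0 hfg
      rw [hE0A] at h
      simpa [hE0, zero_pow (show n - 1 ≠ 0 by omega)] using h
    have h5 : p.coeff 0 = 0 := by
      have h := congrArg (Polynomial.eval 0) h4
      simpa using h.symm
    have h6 : E0 f = 0 := by
      rw [h5, Polynomial.C_0] at h4
      rcases mul_eq_zero.1 h4 with h | h
      · exact h
      · exact absurd h (pow_ne_zero _ Polynomial.X_ne_zero)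
    have hc : ∀ (E : MvPolynomial (Fin 2) k →ₐ[k] Polynomial k),
        Polynomial.aeval (0:k) (E f) =
          (Polynomial.aeval (0:k)).comp E f := fun E => rfl
    have h7 : (E1 f).coeff 0 = 0 := by
      have e1 : (Polynomial.aeval (0:k)).comp E1 = (Polynomial.aeval (0:k)).comp E0 := by
        rw [hE1, hE0, MvPolynomial.comp_aeval, MvPolynomial.comp_aeval]
        congr 1
        funext i
        by_cases hi : i = 0 <;> simp [hi]
      have e2 : Polynomial.aeval (0:k) (E1 f) = 0 := by
        rw [hc, e1, ← hc, h6, map_zero]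
      rw [Polynomial.aeval_def, Polynomial.eval₂_at_zero] at e2
      exact e2
    obtain ⟨h, hh⟩ := Polynomial.X_dvd_iff.2 h7
    refine ⟨h, ?_⟩
    rw [← h3, hh, show (Polynomial.X : Polynomial k) ^ n =
      Polynomial.X ^ (n-1) * Polynomial.X from by rw [← pow_succ]; congr 1; omega]
    ring
  have hcomp : σ.comp ψ = ψ := by
    apply AdjoinRoot.algHom_ext
    rw [AlgHom.comp_apply, hψroot, hσx]
  have hmem : ∀ z, ψ z ∈ AlgHom.equalizer σ (AlgHom.id k _) := by
    intro z
    show σ (ψ z) = ψ z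
    exact AlgHom.congr_fun hcomp z
  have hsurj : Function.Surjective (ψ.codRestrict _ hmem) := by
    rintro ⟨q, hq⟩
    have hq' : q ∈ Submodule.span k S := by rw [← hEq]; exact hq
    have hle : Submodule.span k S ≤ Subalgebra.toSubmodule ψ.range := by
      rw [Submodule.span_le]
      rintro _ ⟨i, rfl⟩
      refine ⟨AdjoinRoot.root _ ^ (i:ℕ), ?_⟩
      show ψ (AdjoinRoot.root _ ^ (i:ℕ)) = x ^ (i:ℕ)
      rw [map_pow, hψroot]
    obtain ⟨z, hzq⟩ := hle hq'
    exact ⟨z, Subtype.ext hzq⟩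
  refine ⟨AlgEquiv.ofBijective (ψ.codRestrict _ hmem)
    ⟨fun a b h => hinj (congrArg Subtype.val h), hsurj⟩, ?_⟩
  show ((ψ.codRestrict _ hmem) (AdjoinRoot.root _) : MvPolynomial (Fin 2) k ⧸ I) = x
  rw [AlgHom.coe_codRestrict]
  exact hψroot
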